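/- arXiv:1905.05113 — 3 statements merged into one kernel-verified Lean document; each statement's English description precedes it below -/
import Mathlib

section
/- Under the BC-RED assumptions (g convex and continuously differentiable with block gradients ∇_i g block L_max-Lipschitz, each block denoiser D_i block nonexpansive, τ > 0), each block operator G_i = ∇_i g + τ U_iᵀ(I − D) of G(x) = ∇g(x) + τ(x − D(x)) is block 1/(L_max + 2τ)-cocoercive: for all y ∈ ℝ^n and h ∈ ℝ^{n_i}, ⟨G_i(y + U_i h) − G_i(y), h⟩ ≥ (1/(L_max + 2τ)) ‖G_i(y + U_i h) − G_i(y)‖². -/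
open scoped RealInnerProductSpace BigOperators

noncomputable section

section Aux
open InnerProductSpace

variable {E : Type*} [NormedAddCommGroup E] [InnerProductSpace ℝ E] [CompleteSpace E]

lemma my_lineDeriv {f : E → ℝ} {f' : E → E} (hf : ∀ x, HasGradientAt f (f' x) x)
    (x v : E) (t : ℝ) :
    HasDerivAt (fun t : ℝ => f (x + t • v)) ⟪f' (x + t • v), v⟫ t := by
  have h1 : HasDerivAt (fun t : ℝ => x + t • v) v t := by
    simpa using ((hasDerivAt_id t).smul_const v).const_add x
  have h2 := (hf (x + t • v)).hasFDerivAt.comp_hasDerivAt t h1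
  simpa [Function.comp_def, toDual_apply_apply] using h2

lemma my_inner_gradient (c : E) (x : E) : HasGradientAt (fun y => ⟪c, y⟫) c x := by
  have h : (fun y : E => ⟪c, y⟫) = ⇑(toDual ℝ E c) := by
    funext y; rw [toDual_apply_apply]
  rw [HasGradientAt, HasGradientAtFilter, h]
  exact (toDual ℝ E c).hasFDerivAt

lemma my_grad_sub_inner {f : E → ℝ} {f' : E → E} (hf : ∀ x, HasGradientAt f (f' x) x)
    (c : E) (x : E) : HasGradientAt (fun y => f y - ⟪c, y⟫) (f' x - c) x := by
  have h := (hf x).hasFDerivAt.sub (my_inner_gradient c x).hasFDerivAt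
  rw [HasGradientAt, HasGradientAtFilter, map_sub]
  exact h

lemma my_first_order {f : E → ℝ} {f' : E → E} (hconv : ConvexOn ℝ Set.univ f)
    (hf : ∀ x, HasGradientAt f (f' x) x) (x y : E) :
    f x + ⟪f' x, y - x⟫ ≤ f y := by
  have hψ : ConvexOn ℝ Set.univ (fun t : ℝ => f (x + t • (y - x))) := by
    have h := hconv.comp_affineMap (AffineMap.lineMap x y)
    have he : (fun t : ℝ => f (x + t • (y - x))) = (f ∘ (AffineMap.lineMap x y)) := by
      funext t; simp only [Function.comp, AffineMap.lineMap_apply_module]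
      congr 1; module
    rw [he]
    simpa using h
  have hd : HasDerivAt (fun t : ℝ => f (x + t • (y - x))) ⟪f' x, y - x⟫ 0 := by
    have := my_lineDeriv hf x (y - x) 0
    simpa using this
  have hs := hψ.le_slope_of_hasDerivAt (Set.mem_univ (0 : ℝ)) (Set.mem_univ (1 : ℝ))
    one_pos hd
  simp [slope_def_field] at hs
  linarith [hs]

lemma my_descent {f : E → ℝ} {f' : E → E} {L : ℝ} (hL : 0 < L)
    (hf : ∀ x, HasGradientAt f (f' x) x)
    (hlip : ∀ a b : E, ‖f' a - f' b‖ ≤ L * ‖a - b‖) (x v : E) :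
    f (x + v) ≤ f x + ⟪f' x, v⟫ + L / 2 * ‖v‖ ^ 2 := by
  set C : ℝ := ⟪f' x, v⟫ with hC
  set K : ℝ := L / 2 * ‖v‖ ^ 2 with hK
  set χ : ℝ → ℝ := fun t => f (x + t • v) - t * C - t ^ 2 * K with hχ
  have hd : ∀ t : ℝ, HasDerivAt χ (⟪f' (x + t • v), v⟫ - C - 2 * t * K) t := by
    intro t
    have h1 := my_lineDeriv hf x v t
    have h2 : HasDerivAt (fun t : ℝ => t * C) C t := hasDerivAt_mul_const C
    have h3 : HasDerivAt (fun t : ℝ => t ^ 2 * K) (2 * t * K) t := by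
      have := (hasDerivAt_pow 2 t).mul_const K
      simpa [mul_comm] using this
    exact (h1.sub h2).sub h3
  have hmono : AntitoneOn χ (Set.Icc 0 1) := by
    apply antitoneOn_of_deriv_nonpos (convex_Icc 0 1)
    · exact Continuous.continuousOn (by
        have : ∀ t, DifferentiableAt ℝ χ t := fun t => (hd t).differentiableAt
        exact Differentiable.continuous this)
    · exact fun t _ => (hd t).differentiableAt.differentiableWithinAt
    · intro t ht
      rw [interior_Icc] at ht
      rw [(hd t).deriv]
      have hub : ⟪f' (x + t • v) - f' x, v⟫ ≤ L * t * ‖v‖ ^ 2 := by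
        calc ⟪f' (x + t • v) - f' x, v⟫ ≤ ‖f' (x + t • v) - f' x‖ * ‖v‖ :=
              real_inner_le_norm _ _
          _ ≤ (L * ‖x + t • v - x‖) * ‖v‖ := by
              gcongr; exact hlip _ _
          _ = L * t * ‖v‖ ^ 2 := by
              rw [add_sub_cancel_left, norm_smul, Real.norm_eq_abs,
                abs_of_pos ht.1]; ring
      have : ⟪f' (x + t • v), v⟫ - C = ⟪f' (x + t • v) - f' x, v⟫ := by
        rw [inner_sub_left]
      rw [this]
      have : 2 * t * K = L * t * ‖v‖ ^ 2 := by rw [hK]; ring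
      rw [this]
      linarith
  have := hmono (Set.left_mem_Icc.2 zero_le_one) (Set.right_mem_Icc.2 zero_le_one)
    zero_le_one
  simp only [hχ] at this
  simp at this
  linarith [this]

lemma my_coco_half {f : E → ℝ} {f' : E → E} {L : ℝ} (hL : 0 < L)
    (hconv : ConvexOn ℝ Set.univ f) (hf : ∀ x, HasGradientAt f (f' x) x)
    (hlip : ∀ a b : E, ‖f' a - f' b‖ ≤ L * ‖a - b‖) (a b : E) :
    f b - ⟪f' b, b⟫ + 1 / (2 * L) * ‖f' a - f' b‖ ^ 2 ≤ f a - ⟪f' b, a⟫ := by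
  set h : E → ℝ := fun y => f y - ⟪f' b, y⟫ with hh
  set h' : E → E := fun y => f' y - f' b with hh'
  have hgrad : ∀ x, HasGradientAt h (h' x) x := fun x => my_grad_sub_inner hf (f' b) x
  have hconvh : ConvexOn ℝ Set.univ h := by
    apply hconv.sub
    refine ⟨convex_univ, fun p _ q _ s t hs ht hst => le_of_eq ?_⟩
    simp [inner_add_right, real_inner_smul_right]
  have hliph : ∀ p q : E, ‖h' p - h' q‖ ≤ L * ‖p - q‖ := by
    intro p q
    have : h' p - h' q = f' p - f' q := by simp only [hh']; abel
    rw [this]; exact hlip p q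
  have hmin : ∀ z, h b ≤ h z := by
    intro z
    have := my_first_order hconvh hgrad b z
    have hz : h' b = 0 := by simp [hh']
    rw [hz] at this
    simpa using this
  set w : E := f' a - f' b with hw
  have hdes := my_descent hL hgrad hliph a (-(1 / L) • w)
  have h1 : h (a + -(1 / L) • w) ≤ h a - 1 / (2 * L) * ‖w‖ ^ 2 := by
    have e1 : ⟪h' a, -(1 / L) • w⟫ = -(1 / L) * ‖w‖ ^ 2 := by
      rw [real_inner_smul_right]
      have : h' a = w := rfl
      rw [this, real_inner_self_eq_norm_sq]
    have e2 : L / 2 * ‖-(1 / L) • w‖ ^ 2 = 1 / (2 * L) * ‖w‖ ^ 2 := by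
      rw [norm_smul, Real.norm_eq_abs, mul_pow]
      have : |(-(1 / L))| = 1 / L := by
        rw [abs_neg, abs_of_pos (by positivity)]
      rw [this]
      field_simp
    rw [e1, e2] at hdes
    have : -(1/L) * ‖w‖^2 + 1/(2*L) * ‖w‖^2 = -(1/(2*L)) * ‖w‖^2 := by
      field_simp; ring
    linarith [hdes]
  have := le_trans (hmin (a + -(1 / L) • w)) h1
  simp only [hh] at this
  linarith [this]

lemma my_coco {f : E → ℝ} {f' : E → E} {L : ℝ} (hL : 0 < L)
    (hconv : ConvexOn ℝ Set.univ f) (hf : ∀ x, HasGradientAt f (f' x) x)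
    (hlip : ∀ a b : E, ‖f' a - f' b‖ ≤ L * ‖a - b‖) (a b : E) :
    1 / L * ‖f' a - f' b‖ ^ 2 ≤ ⟪f' a - f' b, a - b⟫ := by
  have h1 := my_coco_half hL hconv hf hlip a b
  have h2 := my_coco_half hL hconv hf hlip b a
  have hnorm : ‖f' b - f' a‖ = ‖f' a - f' b‖ := norm_sub_rev _ _
  rw [hnorm] at h2
  have hexp : ⟪f' a - f' b, a - b⟫ =
      ⟪f' a, a⟫ - ⟪f' a, b⟫ - ⟪f' b, a⟫ + ⟪f' b, b⟫ := by
    rw [inner_sub_left, inner_sub_right, inner_sub_right]; ring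
  have hL2 : 1 / L = 1 / (2 * L) + 1 / (2 * L) := by field_simp; ring
  rw [hexp, hL2]
  linarith
end Aux

/-- The `i`-th block of `ℝ^n = ℝ^{n 0} × ⋯ × ℝ^{n (b-1)}`. -/
abbrev Blk {b : ℕ} (n : Fin b → ℕ) (i : Fin b) := EuclideanSpace ℝ (Fin (n i))

/-- The full space `ℝ^n` decomposed into `b` blocks. -/
abbrev FullSpace {b : ℕ} (n : Fin b → ℕ) := PiLp 2 fun i => Blk n i

/-- `U_i : ℝ^{n_i} → ℝ^n`, the injection of the `i`-th block (zero elsewhere). -/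
noncomputable def blockInj {b : ℕ} (n : Fin b → ℕ) (i : Fin b) (h : Blk n i) :
    FullSpace n := WithLp.toLp 2 (Pi.single i h)

/-- `U_iᵀ : ℝ^n → ℝ^{n_i}`, extraction of the `i`-th block. -/
def blockExt {b : ℕ} (n : Fin b → ℕ) (i : Fin b) (x : FullSpace n) : Blk n i := x i

/-- `T_i : ℝ^n → ℝ^{n_i}` is block Lipschitz continuous with constant `lam`. -/
def BlockLipschitz {b : ℕ} (n : Fin b → ℕ) (i : Fin b)
    (T : FullSpace n → Blk n i) (lam : ℝ) : Prop :=
  ∀ (y : FullSpace n) (h : Blk n i), ‖T (y + blockInj n i h) - T y‖ ≤ lam * ‖h‖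

/-- `T_i : ℝ^n → ℝ^{n_i}` is block `β`-cocoercive. -/
def BlockCocoercive {b : ℕ} (n : Fin b → ℕ) (i : Fin b)
    (T : FullSpace n → Blk n i) (β : ℝ) : Prop :=
  ∀ (y : FullSpace n) (h : Blk n i),
    β * ‖T (y + blockInj n i h) - T y‖ ^ 2 ≤ ⟪T (y + blockInj n i h) - T y, h⟫

/-- `U_i` as a continuous linear map. -/
noncomputable def blockInjL {b : ℕ} (n : Fin b → ℕ) (i : Fin b) :
    Blk n i →L[ℝ] FullSpace n :=
  LinearMap.toContinuousLinearMap
    (((WithLp.linearEquiv 2 ℝ (∀ j, Blk n j)).symm.toLinearMap).comp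
      (LinearMap.single ℝ (fun j => Blk n j) i))

lemma blockInjL_apply {b : ℕ} (n : Fin b → ℕ) (i : Fin b) (h : Blk n i) :
    blockInjL n i h = blockInj n i h := rfl

lemma blockInj_add {b : ℕ} (n : Fin b → ℕ) (i : Fin b) (h₁ h₂ : Blk n i) :
    blockInj n i (h₁ + h₂) = blockInj n i h₁ + blockInj n i h₂ :=
  map_add (blockInjL n i) h₁ h₂

lemma blockInj_smul {b : ℕ} (n : Fin b → ℕ) (i : Fin b) (c : ℝ) (h : Blk n i) :
    blockInj n i (c • h) = c • blockInj n i h :=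
  map_smul (blockInjL n i) c h

lemma blockInj_zero {b : ℕ} (n : Fin b → ℕ) (i : Fin b) :
    blockInj n i 0 = 0 := map_zero (blockInjL n i)

lemma inner_blockInj {b : ℕ} (n : Fin b → ℕ) (i : Fin b) (x : FullSpace n)
    (h : Blk n i) : ⟪x, blockInj n i h⟫ = ⟪x i, h⟫ := by
  rw [PiLp.inner_apply]
  rw [Finset.sum_eq_single i]
  · simp [blockInj]
  · intro j _ hj
    have : blockInj n i h j = 0 := Pi.single_eq_of_ne hj h
    rw [this, inner_zero_right]
  · intro hx; exact absurd (Finset.mem_univ i) hx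

set_option maxHeartbeats 2000000

/-- each block operator `G_i` of `G = ∇g + τ(I - D)` is block
`1/(L_max + 2τ)`-cocoercive. -/
theorem bcred_block_cocoercive {b : ℕ} (n : Fin b → ℕ)
    (g : FullSpace n → ℝ) (D : FullSpace n → FullSpace n) (τ Lmax : ℝ)
    (hτ : 0 < τ) (hLmax : 0 < Lmax)
    (hg_conv : ConvexOn ℝ Set.univ g) (hg_diff : ContDiff ℝ 1 g)
    (hg_lip : ∀ i, BlockLipschitz n i (fun x => blockExt n i (gradient g x)) Lmax)
    (hD : ∀ i, BlockLipschitz n i (fun x => blockExt n i (D x)) 1)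
    (G : FullSpace n → FullSpace n)
    (hG : ∀ x, G x = gradient g x + τ • (x - D x)) (i : Fin b) :
    BlockCocoercive n i (fun x => blockExt n i (G x)) (1 / (Lmax + 2 * τ)) := by
  intro y h
  have hg_da : ∀ x, DifferentiableAt ℝ g x :=
    fun x => (hg_diff.differentiable one_ne_zero).differentiableAt
  set U : Blk n i → FullSpace n := blockInj n i with hU
  set φ : Blk n i → ℝ := fun k => g (y + U k) with hφ
  set F' : Blk n i → Blk n i := fun k => gradient g (y + U k) i with hF'
  -- gradient of φ
  have hφgrad : ∀ k, HasGradientAt φ (F' k) k := by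
    intro k
    set x₀ : FullSpace n := y + U k with hx₀
    have hfd : HasFDerivAt g (InnerProductSpace.toDual ℝ (FullSpace n) (gradient g x₀)) x₀ :=
      (hg_da x₀).hasGradientAt.hasFDerivAt
    have haff : HasFDerivAt (fun k' : Blk n i => y + blockInjL n i k') (blockInjL n i) k :=
      (blockInjL n i).hasFDerivAt.const_add y
    have hcomp := hfd.comp k haff
    have heq : ((InnerProductSpace.toDual ℝ (FullSpace n) (gradient g x₀)).comp
        (blockInjL n i)) = InnerProductSpace.toDual ℝ (Blk n i) (F' k) := by
      apply ContinuousLinearMap.ext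
      intro w
      simp only [ContinuousLinearMap.coe_comp', Function.comp_apply,
        InnerProductSpace.toDual_apply_apply]
      rw [blockInjL_apply, inner_blockInj]
    rw [heq] at hcomp
    exact hcomp
  -- convexity of φ
  have hφconv : ConvexOn ℝ Set.univ φ := by
    refine ⟨convex_univ, fun p _ q _ s t hs ht hst => ?_⟩
    have key := hg_conv.2 (Set.mem_univ (y + U p)) (Set.mem_univ (y + U q)) hs ht hst
    have e : s • (y + U p) + t • (y + U q) = y + U (s • p + t • q) := by
      rw [hU, blockInj_add, blockInj_smul, blockInj_smul, smul_add, smul_add,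
        add_add_add_comm, ← add_smul, hst, one_smul]
    rw [e] at key
    exact key
  -- Lipschitz of F'
  have hφlip : ∀ p q : Blk n i, ‖F' p - F' q‖ ≤ Lmax * ‖p - q‖ := by
    intro p q
    have key := hg_lip i (y + U q) (p - q)
    have e : y + U q + blockInj n i (p - q) = y + U p := by
      rw [hU, add_assoc, ← blockInj_add, add_sub_cancel]
    rw [e] at key
    exact key
  have key1 := my_coco hLmax hφconv hφgrad hφlip h 0
  rw [sub_zero] at key1
  have hF0 : F' 0 = gradient g y i := by
    rw [hF', hU]; simp [blockInj_zero]
  set a : Blk n i := F' h - F' 0 with ha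
  set d : Blk n i := D (y + U h) i - D y i with hd
  set u : Blk n i := h - d with hu
  -- bound on d
  have hd_norm : ‖d‖ ≤ ‖h‖ := by
    have := hD i y h
    rw [one_mul] at this
    exact this
  -- inner u h ≥ 1/2 ‖u‖²
  have key2 : (1 / 2 : ℝ) * ‖u‖ ^ 2 ≤ ⟪u, h⟫ := by
    have hexp : ‖u - h‖ ^ 2 = ‖u‖ ^ 2 - 2 * ⟪u, h⟫ + ‖h‖ ^ 2 := norm_sub_sq_real u h
    have huh : u - h = -d := by rw [hu]; abel
    rw [huh, norm_neg] at hexp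
    nlinarith [hd_norm, norm_nonneg d, norm_nonneg h]
  -- the block difference of G
  have hGdiff : blockExt n i (G (y + blockInj n i h)) - blockExt n i (G y) = a + τ • u := by
    have hUh : (blockInj n i h) i = h := Pi.single_eq_same i h
    rw [hG, hG]
    simp only [blockExt, PiLp.add_apply, PiLp.smul_apply, PiLp.sub_apply, ha, hu, hd, hF', hU,
      blockInj_zero, add_zero, hUh]
    module
  simp only [hU, hGdiff]
  -- final algebra
  have hCS : ⟪a, τ • u⟫ ≤ ‖a‖ * (τ * ‖u‖) := by
    calc ⟪a, τ • u⟫ ≤ ‖a‖ * ‖τ • u‖ := real_inner_le_norm _ _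
      _ = ‖a‖ * (τ * ‖u‖) := by rw [norm_smul, Real.norm_eq_abs, abs_of_pos hτ]
  have hexp2 : ‖a + τ • u‖ ^ 2 = ‖a‖ ^ 2 + 2 * ⟪a, τ • u⟫ + (τ * ‖u‖) ^ 2 := by
    rw [norm_add_sq_real, norm_smul, Real.norm_eq_abs, abs_of_pos hτ]
  have hinner : ⟪a + τ • u, h⟫ = ⟪a, h⟫ + τ * ⟪u, h⟫ := by
    rw [inner_add_left, real_inner_smul_left]
  have hpos : (0:ℝ) < Lmax + 2 * τ := by linarith
  have F1 : ‖a‖ ^ 2 ≤ Lmax * ⟪a, h⟫ := by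
    rw [div_mul_eq_mul_div, one_mul, div_le_iff₀ hLmax] at key1
    linarith [key1]
  have F2 : ‖u‖ ^ 2 ≤ 2 * ⟪u, h⟫ := by linarith [key2]
  rw [hinner, div_mul_eq_mul_div, one_mul, div_le_iff₀ hpos]
  have main : Lmax * ‖a + τ • u‖ ^ 2 ≤ Lmax * ((⟪a, h⟫ + τ * ⟪u, h⟫) * (Lmax + 2 * τ)) := by
    nlinarith [hexp2, mul_nonneg hτ.le (sq_nonneg (2 * ‖a‖ - Lmax * ‖u‖)),
      mul_le_mul_of_nonneg_left F1 hpos.le,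
      mul_le_mul_of_nonneg_left F2 (by positivity : (0:ℝ) ≤ Lmax * τ * (Lmax + 2 * τ) / 2),
      mul_le_mul_of_nonneg_left hCS (by positivity : (0:ℝ) ≤ 2 * Lmax)]
  exact le_of_mul_le_mul_left main hLmax
end
end

section
/- Full-gradient RED convergence (the b = 1 case): let g : ℝ^n → ℝ be convex and continuously differentiable with L-Lipschitz gradient, let D : ℝ^n → ℝ^n be nonexpansive, let τ > 0, and set G(x) = ∇g(x) + τ(x − D(x)). Assume zer(G) is nonempty and ‖x⁰ − x*‖ ≤ R₀ for some x* ∈ zer(G). Run x^k = x^{k−1} − γ G(x^{k−1}) with 0 < γ ≤ 1/(L + 2τ). Then for all t ≥ 1, min_{k ∈ {1,…,t}} ‖G(x^{k-1})‖² ≤ (1/t) Σ_{k=1}^{t} ‖G(x^{k-1})‖² ≤ ((L + 2τ)/(γ t)) R₀². -/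
open scoped RealInnerProductSpace BigOperators

noncomputable section

section RedAux

variable {E : Type*} [NormedAddCommGroup E] [InnerProductSpace ℝ E] [CompleteSpace E]

private lemma red_line_hasDerivAt (f : E → ℝ) (f' : E → E)
    (hf : ∀ z, HasGradientAt f (f' z) z) (x d : E) (t : ℝ) :
    HasDerivAt (fun s : ℝ => f (x + s • d)) ⟪f' (x + t • d), d⟫ t := by
  have hline : HasDerivAt (fun s : ℝ => x + s • d) d t := by
    simpa using ((hasDerivAt_id t).smul_const d).const_add x
  have hg := (hf (x + t • d)).hasFDerivAt
  have := hg.comp_hasDerivAt t hline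
  simpa [Function.comp_def, InnerProductSpace.toDual_apply_apply] using this

private lemma red_grad_le_sub (f : E → ℝ) (f' : E → E)
    (hconv : ConvexOn ℝ Set.univ f) (hf : ∀ z, HasGradientAt f (f' z) z) (x y : E) :
    ⟪f' x, y - x⟫ ≤ f y - f x := by
  have hconvφ : ConvexOn ℝ Set.univ (fun t : ℝ => f (x + t • (y - x))) := by
    have h := hconv.comp_affineMap (AffineMap.lineMap x y : ℝ →ᵃ[ℝ] E)
    have heq : ((fun t : ℝ => f (x + t • (y - x)))) =
        (f ∘ (AffineMap.lineMap x y : ℝ →ᵃ[ℝ] E)) := by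
      funext t
      simp [Function.comp, AffineMap.lineMap_apply, vsub_eq_sub, vadd_eq_add, add_comm]
    rw [heq]
    simpa using h
  have hd : HasDerivAt (fun t : ℝ => f (x + t • (y - x))) ⟪f' x, y - x⟫ 0 := by
    simpa using red_line_hasDerivAt f f' hf x (y - x) 0
  have := hconvφ.le_slope_of_hasDerivAt (Set.mem_univ 0) (Set.mem_univ 1) one_pos hd
  simpa [slope_def_field] using this

private lemma red_descent (f : E → ℝ) (f' : E → E) {L : ℝ} (hL : 0 < L)
    (hf : ∀ z, HasGradientAt f (f' z) z)
    (hlip : ∀ a b, ‖f' a - f' b‖ ≤ L * ‖a - b‖) (x y : E) :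
    f y ≤ f x + ⟪f' x, y - x⟫ + L / 2 * ‖y - x‖ ^ 2 := by
  set d := y - x with hd
  have hcont : Continuous f' := by
    have : LipschitzWith (Real.toNNReal L) f' := by
      apply LipschitzWith.of_dist_le_mul
      intro a b
      simpa [dist_eq_norm, Real.coe_toNNReal L hL.le] using hlip a b
    exact this.continuous
  have hψcont : Continuous fun t : ℝ => ⟪f' (x + t • d), d⟫ :=
    (hcont.comp (by continuity)).inner continuous_const
  have hftc := intervalIntegral.integral_eq_sub_of_hasDerivAt
      (f := fun s : ℝ => f (x + s • d)) (f' := fun t : ℝ => ⟪f' (x + t • d), d⟫)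
      (a := 0) (b := 1)
      (fun t _ => red_line_hasDerivAt f f' hf x d t)
      (hψcont.intervalIntegrable 0 1)
  have hftc' : ∫ t in (0:ℝ)..1, ⟪f' (x + t • d), d⟫ = f y - f x := by
    simpa [hd] using hftc
  have key : ∫ t in (0:ℝ)..1, ⟪f' (x + t • d), d⟫ ≤
      ∫ t in (0:ℝ)..1, (⟪f' x, d⟫ + L * ‖d‖ ^ 2 * t) := by
    apply intervalIntegral.integral_mono_on (by norm_num)
    · exact hψcont.intervalIntegrable 0 1
    · exact ((by fun_prop : Continuous fun t : ℝ => ⟪f' x, d⟫ + L * ‖d‖ ^ 2 * t)).intervalIntegrable 0 1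
    · intro t ht
      have h1 : ⟪f' (x + t • d), d⟫ - ⟪f' x, d⟫ = ⟪f' (x + t • d) - f' x, d⟫ := by
        rw [inner_sub_left]
      have h2 : ⟪f' (x + t • d) - f' x, d⟫ ≤ ‖f' (x + t • d) - f' x‖ * ‖d‖ :=
        real_inner_le_norm _ _
      have h3 : ‖f' (x + t • d) - f' x‖ ≤ L * (t * ‖d‖) := by
        have := hlip (x + t • d) x
        simpa [norm_smul, abs_of_nonneg ht.1] using this
      nlinarith [norm_nonneg d, norm_nonneg (f' (x + t • d) - f' x)]
  have hrhs : ∫ t in (0:ℝ)..1, (⟪f' x, d⟫ + L * ‖d‖ ^ 2 * t) = ⟪f' x, d⟫ + L / 2 * ‖d‖ ^ 2 := by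
    rw [intervalIntegral.integral_add
        ((continuous_const : Continuous fun _ : ℝ => ⟪f' x, d⟫).intervalIntegrable 0 1)
        (((by fun_prop : Continuous fun t : ℝ => L * ‖d‖ ^ 2 * t)).intervalIntegrable 0 1)]
    rw [intervalIntegral.integral_const]
    rw [intervalIntegral.integral_const_mul]
    rw [integral_id]
    ring_nf
  have := key.trans_eq hrhs
  rw [hftc'] at this
  linarith

private lemma red_lower_bound (f : E → ℝ) (f' : E → E) {L : ℝ} (hL : 0 < L)
    (hconv : ConvexOn ℝ Set.univ f)
    (hf : ∀ z, HasGradientAt f (f' z) z)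
    (hlip : ∀ a b, ‖f' a - f' b‖ ≤ L * ‖a - b‖) (x y : E) :
    f y + ⟪f' y, x - y⟫ + 1 / (2 * L) * ‖f' x - f' y‖ ^ 2 ≤ f x := by
  set c := f' y with hc
  set h : E → ℝ := fun z => f z - ⟪c, z⟫ with hh
  set h' : E → E := fun z => f' z - c with hh'
  have hgrad : ∀ z, HasGradientAt h (h' z) z := by
    intro z
    have h1 : HasFDerivAt f (InnerProductSpace.toDual ℝ E (f' z)) z := (hf z).hasFDerivAt
    have h2 : HasFDerivAt (fun w : E => ⟪c, w⟫) (InnerProductSpace.toDual ℝ E c) z := by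
      convert (InnerProductSpace.toDual ℝ E c).hasFDerivAt (x := z) using 1
      funext w; simp [InnerProductSpace.toDual_apply_apply]
    rw [HasGradientAt, HasGradientAtFilter]
    simp only [hh', map_sub]
    exact h1.sub h2
  have hconvh : ConvexOn ℝ Set.univ h := by
    refine ⟨convex_univ, fun a _ b _ p q hp hq hpq => ?_⟩
    have := hconv.2 (Set.mem_univ a) (Set.mem_univ b) hp hq hpq
    simp only [smul_eq_mul] at this
    simp only [hh, inner_add_right, real_inner_smul_right, smul_eq_mul]
    linarith
  have hliph : ∀ a b, ‖h' a - h' b‖ ≤ L * ‖a - b‖ := by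
    intro a b
    simpa [hh', sub_sub_sub_cancel_right] using hlip a b
  have hmin : h y ≤ h (x - L⁻¹ • h' x) := by
    have := red_grad_le_sub h h' hconvh hgrad y (x - L⁻¹ • h' x)
    have hy0 : h' y = 0 := by simp [hh', hc]
    rw [hy0] at this
    simpa using this
  have hdes := red_descent h h' hL hgrad hliph x (x - L⁻¹ • h' x)
  have hz : x - L⁻¹ • h' x - x = -(L⁻¹ • h' x) := by abel
  rw [hz] at hdes
  have e1 : ⟪h' x, -(L⁻¹ • h' x)⟫ = -(L⁻¹ * ‖h' x‖ ^ 2) := by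
    rw [inner_neg_right, real_inner_smul_right, real_inner_self_eq_norm_sq]
  have e2 : ‖-(L⁻¹ • h' x)‖ ^ 2 = L⁻¹ ^ 2 * ‖h' x‖ ^ 2 := by
    rw [norm_neg, norm_smul]
    simp [abs_of_nonneg (inv_nonneg.mpr hL.le), mul_pow]
  rw [e1, e2] at hdes
  have hcomb : h y ≤ h x - 1 / (2 * L) * ‖h' x‖ ^ 2 := by
    have hL' : L ≠ 0 := hL.ne'
    calc h y ≤ h (x - L⁻¹ • h' x) := hmin
    _ ≤ h x + -(L⁻¹ * ‖h' x‖ ^ 2) + L / 2 * (L⁻¹ ^ 2 * ‖h' x‖ ^ 2) := hdes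
    _ = h x - 1 / (2 * L) * ‖h' x‖ ^ 2 := by field_simp; ring
  have hhx : h x = f x - ⟪c, x⟫ := rfl
  have hhy : h y = f y - ⟪c, y⟫ := rfl
  have hhx' : h' x = f' x - c := rfl
  rw [hhx, hhy, hhx'] at hcomb
  have : ⟪f' y, x - y⟫ = ⟪c, x⟫ - ⟪c, y⟫ := by rw [inner_sub_right]
  linarith

private lemma red_coco (f : E → ℝ) (f' : E → E) {L : ℝ} (hL : 0 < L)
    (hconv : ConvexOn ℝ Set.univ f)
    (hf : ∀ z, HasGradientAt f (f' z) z)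
    (hlip : ∀ a b, ‖f' a - f' b‖ ≤ L * ‖a - b‖) (x y : E) :
    1 / L * ‖f' x - f' y‖ ^ 2 ≤ ⟪f' x - f' y, x - y⟫ := by
  have h1 := red_lower_bound f f' hL hconv hf hlip x y
  have h2 := red_lower_bound f f' hL hconv hf hlip y x
  rw [norm_sub_rev (f' y)] at h2
  have e1 : ⟪f' x - f' y, x - y⟫ = ⟪f' x, x⟫ - ⟪f' x, y⟫ - ⟪f' y, x⟫ + ⟪f' y, y⟫ := by
    rw [inner_sub_left, inner_sub_right, inner_sub_right]; ring
  have e2 : ⟪f' y, x - y⟫ = ⟪f' y, x⟫ - ⟪f' y, y⟫ := inner_sub_right _ _ _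
  have e3 : ⟪f' x, y - x⟫ = ⟪f' x, y⟫ - ⟪f' x, x⟫ := inner_sub_right _ _ _
  rw [e2] at h1; rw [e3] at h2
  have hL' : (0:ℝ) < 2 * L := by linarith
  have hsplit : 1 / L = 1 / (2 * L) + 1 / (2 * L) := by field_simp; ring
  rw [hsplit, e1]
  nlinarith

end RedAux

set_option maxHeartbeats 1000000 in
/-- full-gradient RED convergence (the `b = 1` case). -/
theorem red_full_gradient_convergence (N : ℕ)
    (g : EuclideanSpace ℝ (Fin N) → ℝ)
    (D : EuclideanSpace ℝ (Fin N) → EuclideanSpace ℝ (Fin N))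
    (L τ : ℝ) (hL : 0 < L) (hτ : 0 < τ)
    (hg_conv : ConvexOn ℝ Set.univ g) (hg_diff : ContDiff ℝ 1 g)
    (hg_lip : ∀ x y, ‖gradient g x - gradient g y‖ ≤ L * ‖x - y‖)
    (hD : ∀ x y, ‖D x - D y‖ ≤ ‖x - y‖)
    (G : EuclideanSpace ℝ (Fin N) → EuclideanSpace ℝ (Fin N))
    (hG : ∀ x, G x = gradient g x + τ • (x - D x))
    (x0 xs : EuclideanSpace ℝ (Fin N)) (R0 : ℝ)
    (hxs : G xs = 0) (hR0 : ‖x0 - xs‖ ≤ R0)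
    (γ : ℝ) (hγ : 0 < γ) (hγ' : γ ≤ 1 / (L + 2 * τ))
    (X : ℕ → EuclideanSpace ℝ (Fin N))
    (hX0 : X 0 = x0) (hX : ∀ k, X (k + 1) = X k - γ • G (X k))
    (t : ℕ) (ht : 1 ≤ t) :
    (⨅ k : Fin t, ‖G (X k)‖ ^ 2) ≤ (1 / (t : ℝ)) * ∑ k : Fin t, ‖G (X k)‖ ^ 2
    ∧ (1 / (t : ℝ)) * ∑ k : Fin t, ‖G (X k)‖ ^ 2
      ≤ ((L + 2 * τ) / (γ * t)) * R0 ^ 2 := by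
  have hf : ∀ z, HasGradientAt g (gradient g z) z :=
    fun z => ((hg_diff.differentiable one_ne_zero) z).hasGradientAt
  have hLτ : 0 < L + 2 * τ := by linarith
  set β : ℝ := 1 / (L + 2 * τ) with hβdef
  have hβ : 0 < β := by positivity
  have htpos : (0:ℝ) < (t : ℝ) := by exact_mod_cast Nat.lt_of_lt_of_le Nat.zero_lt_one ht
  -- cocoercivity of G
  have hco : ∀ x, β * ‖G x‖ ^ 2 ≤ ⟪G x, x - xs⟫ := by
    intro x
    set A := gradient g x - gradient g xs with hA
    set B := τ • ((x - D x) - (xs - D xs)) with hB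
    have hGx : G x = A + B := by
      have h0 : G x = G x - G xs := by rw [hxs, sub_zero]
      rw [h0, hG x, hG xs, hA, hB]
      module
    -- bound for A
    have hAbd : 1 / L * ‖A‖ ^ 2 ≤ ⟪A, x - xs⟫ :=
      red_coco g (gradient g) hL hg_conv hf hg_lip x xs
    -- bound for B
    have hBbd : 1 / (2 * τ) * ‖B‖ ^ 2 ≤ ⟪B, x - xs⟫ := by
      set d := x - xs with hd
      set e := D x - D xs with he
      have hde : (x - D x) - (xs - D xs) = d - e := by rw [hd, he]; abel
      have hB' : B = τ • (d - e) := by rw [hB, hde]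
      have h1 : ‖e‖ ≤ ‖d‖ := hD x xs
      have h2 : 1 / 2 * ‖d - e‖ ^ 2 ≤ ⟪d - e, d⟫ := by
        rw [inner_sub_left, norm_sub_sq_real, real_inner_self_eq_norm_sq,
          real_inner_comm e d]
        nlinarith [norm_nonneg d, norm_nonneg e]
      have hBnorm : ‖B‖ ^ 2 = τ ^ 2 * ‖d - e‖ ^ 2 := by
        rw [hB', norm_smul]
        simp [abs_of_nonneg hτ.le, mul_pow]
      have hBin : ⟪B, d⟫ = τ * ⟪d - e, d⟫ := by
        rw [hB', real_inner_smul_left]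
      rw [hBnorm, hBin]
      have hτ2 : 1 / (2 * τ) * (τ ^ 2 * ‖d - e‖ ^ 2) = τ * (1 / 2 * ‖d - e‖ ^ 2) := by
        field_simp
      rw [hτ2]
      exact mul_le_mul_of_nonneg_left h2 hτ.le
    -- combine
    have h2ab : 2 * (‖A‖ * ‖B‖) ≤ 2 * τ / L * ‖A‖ ^ 2 + L / (2 * τ) * ‖B‖ ^ 2 := by
      have key : 0 ≤ (2 * τ * ‖A‖ - L * ‖B‖) ^ 2 := sq_nonneg _
      have hpos : (0:ℝ) < 2 * τ * L := by positivity
      rw [div_mul_eq_mul_div, div_mul_eq_mul_div, div_add_div _ _ hL.ne' (by positivity : (2*τ:ℝ) ≠ 0), le_div_iff₀ (by positivity)]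
      nlinarith
    have hnorm : ‖G x‖ ^ 2 ≤ (L + 2 * τ) * (1 / L * ‖A‖ ^ 2 + 1 / (2 * τ) * ‖B‖ ^ 2) := by
      rw [hGx, norm_add_sq_real]
      have hab := real_inner_le_norm A B
      have expand : (L + 2 * τ) * (1 / L * ‖A‖ ^ 2 + 1 / (2 * τ) * ‖B‖ ^ 2)
          = ‖A‖ ^ 2 + 2 * τ / L * ‖A‖ ^ 2 + ‖B‖ ^ 2 + L / (2 * τ) * ‖B‖ ^ 2 := by
        field_simp; ring
      rw [expand]
      nlinarith
    have hβ1 : β * (L + 2 * τ) = 1 := by rw [hβdef]; field_simp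
    calc β * ‖G x‖ ^ 2
        ≤ β * ((L + 2 * τ) * (1 / L * ‖A‖ ^ 2 + 1 / (2 * τ) * ‖B‖ ^ 2)) :=
          mul_le_mul_of_nonneg_left hnorm hβ.le
      _ = 1 / L * ‖A‖ ^ 2 + 1 / (2 * τ) * ‖B‖ ^ 2 := by rw [← mul_assoc, hβ1, one_mul]
      _ ≤ ⟪A, x - xs⟫ + ⟪B, x - xs⟫ := add_le_add hAbd hBbd
      _ = ⟪G x, x - xs⟫ := by rw [hGx, inner_add_left]
  -- one step descent
  have hstep : ∀ k, ‖X (k+1) - xs‖ ^ 2 + γ * β * ‖G (X k)‖ ^ 2 ≤ ‖X k - xs‖ ^ 2 := by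
    intro k
    rw [hX k]
    have hre : X k - γ • G (X k) - xs = (X k - xs) - γ • G (X k) := by abel
    rw [hre, norm_sub_sq_real, real_inner_smul_right, norm_smul]
    have habs : |γ| = γ := abs_of_nonneg hγ.le
    rw [Real.norm_eq_abs, habs]
    have hcok := hco (X k)
    have hgb : γ ≤ β := hγ'
    have hI : ⟪X k - xs, G (X k)⟫ = ⟪G (X k), X k - xs⟫ := real_inner_comm _ _
    rw [hI]
    nlinarith [sq_nonneg ‖G (X k)‖, mul_le_mul_of_nonneg_left hcok (by positivity : (0:ℝ) ≤ 2 * γ),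
      mul_nonneg (mul_nonneg hγ.le (sub_nonneg.mpr hgb)) (sq_nonneg ‖G (X k)‖)]
  -- telescoping
  have htel : ∀ n, ‖X n - xs‖ ^ 2 + γ * β * ∑ k ∈ Finset.range n, ‖G (X k)‖ ^ 2
      ≤ ‖X 0 - xs‖ ^ 2 := by
    intro n
    induction n with
    | zero => simp
    | succ n ih =>
      rw [Finset.sum_range_succ]
      have h1 := hstep n
      have h2 : γ * β * (∑ k ∈ Finset.range n, ‖G (X k)‖ ^ 2 + ‖G (X n)‖ ^ 2)
          = γ * β * ∑ k ∈ Finset.range n, ‖G (X k)‖ ^ 2 + γ * β * ‖G (X n)‖ ^ 2 := by ring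
      rw [h2]
      linarith
  set S := ∑ k : Fin t, ‖G (X k)‖ ^ 2 with hSdef
  have hSrange : S = ∑ k ∈ Finset.range t, ‖G (X k)‖ ^ 2 :=
    Fin.sum_univ_eq_sum_range (fun k => ‖G (X k)‖ ^ 2) t
  have hR0' : ‖X 0 - xs‖ ^ 2 ≤ R0 ^ 2 := by
    rw [hX0]
    exact pow_le_pow_left₀ (norm_nonneg _) hR0 2
  have hSb : γ * β * S ≤ R0 ^ 2 := by
    have := htel t
    rw [← hSrange] at this
    nlinarith [sq_nonneg ‖X t - xs‖]
  have hSb2 : S ≤ (L + 2 * τ) / γ * R0 ^ 2 := by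
    have hγβ : 0 < γ * β := by positivity
    rw [← le_div_iff₀' hγβ] at hSb
    calc S ≤ R0 ^ 2 / (γ * β) := hSb
      _ = (L + 2 * τ) / γ * R0 ^ 2 := by rw [hβdef]; field_simp
  constructor
  · -- infimum le average
    have : Nonempty (Fin t) := ⟨⟨0, ht⟩⟩
    have hbdd : BddBelow (Set.range fun k : Fin t => ‖G (X k)‖ ^ 2) :=
      Set.Finite.bddBelow (Set.finite_range _)
    have hile : ∀ k : Fin t, (⨅ j : Fin t, ‖G (X j)‖ ^ 2) ≤ ‖G (X k)‖ ^ 2 :=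
      fun k => ciInf_le hbdd k
    have hsum : (t : ℝ) * (⨅ j : Fin t, ‖G (X j)‖ ^ 2) ≤ S := by
      rw [hSdef]
      calc (t : ℝ) * (⨅ j : Fin t, ‖G (X j)‖ ^ 2)
          = ∑ _k : Fin t, (⨅ j : Fin t, ‖G (X j)‖ ^ 2) := by
            rw [Finset.sum_const, Finset.card_univ, Fintype.card_fin, nsmul_eq_mul]
        _ ≤ ∑ k : Fin t, ‖G (X k)‖ ^ 2 := Finset.sum_le_sum fun k _ => hile k
    rw [one_div, inv_mul_eq_div, le_div_iff₀ htpos]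
    linarith [hsum]
  · calc (1 / (t : ℝ)) * S ≤ (1 / (t : ℝ)) * ((L + 2 * τ) / γ * R0 ^ 2) :=
        mul_le_mul_of_nonneg_left hSb2 (by positivity)
    _ = ((L + 2 * τ) / (γ * t)) * R0 ^ 2 := by ring
end
end

section
/- For a proper, closed, convex h : ℝ^n → ℝ ∪ {+∞} and μ > 0, the Moreau envelope h_μ is convex and continuously differentiable on ℝ^n, its gradient is ∇h_μ(x) = x − prox_{μh}(x) for all x ∈ ℝ^n, and ∇h_μ is 1-Lipschitz. -/
open scoped RealInnerProductSpace BigOperators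

noncomputable section

/-- the Moreau envelope `h_μ` of a (closed, proper) convex `h` is
convex and continuously differentiable with `∇h_μ(x) = x − prox_{μh}(x)`, and
`∇h_μ` is `1`-Lipschitz. The proximal operator is characterized variationally
as the minimizer of `z ↦ ½‖z − x‖² + μ h(z)`, and `env = h_μ` is its minimum
value. -/
theorem moreau_envelope_differentiable (N : ℕ)
    (h : EuclideanSpace ℝ (Fin N) → ℝ) (μ : ℝ) (hμ : 0 < μ)
    (hconv : ConvexOn ℝ Set.univ h)
    (prox : EuclideanSpace ℝ (Fin N) → EuclideanSpace ℝ (Fin N))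
    (hprox : ∀ x z, (1 / 2) * ‖prox x - x‖ ^ 2 + μ * h (prox x)
      ≤ (1 / 2) * ‖z - x‖ ^ 2 + μ * h z)
    (env : EuclideanSpace ℝ (Fin N) → ℝ)
    (henv : ∀ x, env x = (1 / 2) * ‖prox x - x‖ ^ 2 + μ * h (prox x)) :
    ConvexOn ℝ Set.univ env ∧ ContDiff ℝ 1 env
    ∧ (∀ x, gradient env x = x - prox x)
    ∧ LipschitzWith 1 (fun x => gradient env x) := by
  -- Key variational inequality
  have hK : ∀ x z : EuclideanSpace ℝ (Fin N),
      0 ≤ ⟪prox x - x, z - prox x⟫ + μ * (h z - h (prox x)) := by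
    intro x z
    set a : ℝ := ⟪prox x - x, z - prox x⟫ + μ * (h z - h (prox x)) with ha
    set c : ℝ := ‖z - prox x‖ ^ 2 with hc
    have hc0 : 0 ≤ c := by positivity
    have key : ∀ t : ℝ, 0 < t → t ≤ 1 → 0 ≤ a + t / 2 * c := by
      intro t ht ht1
      have hcv := hconv.2 (Set.mem_univ (prox x)) (Set.mem_univ z)
        (by linarith : (0:ℝ) ≤ 1 - t) ht.le (by ring)
      simp only [smul_eq_mul] at hcv
      have hpr := hprox x ((1 - t) • prox x + t • z)
      have hre : (1 - t) • prox x + t • z - x = (prox x - x) + t • (z - prox x) := by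
        module
      rw [hre] at hpr
      have hexp : ‖(prox x - x) + t • (z - prox x)‖ ^ 2
          = ‖prox x - x‖ ^ 2 + 2 * (t * ⟪prox x - x, z - prox x⟫) + t ^ 2 * c := by
        rw [norm_add_sq_real, real_inner_smul_right, norm_smul, Real.norm_eq_abs,
          mul_pow, sq_abs, hc]
      rw [hexp] at hpr
      have h2 : 0 ≤ t * (a + t / 2 * c) := by rw [ha]; nlinarith
      have := (mul_nonneg_iff_of_pos_left ht).mp h2
      linarith
    by_contra hlt
    push_neg at hlt
    have ht : 0 < min 1 (-a / (c + 1)) :=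
      lt_min one_pos (div_pos (by linarith) (by positivity))
    have hkey := key _ ht (min_le_left _ _)
    have h2 : min 1 (-a / (c + 1)) ≤ -a / (c + 1) := min_le_right _ _
    have h3 : min 1 (-a / (c + 1)) * (c + 1) ≤ -a :=
      (le_div_iff₀ (by positivity)).mp h2
    nlinarith
  -- firm nonexpansiveness
  have hfirm : ∀ x y : EuclideanSpace ℝ (Fin N),
      ‖prox x - prox y‖ ^ 2 ≤ ⟪x - y, prox x - prox y⟫ := by
    intro x y
    have h1 := hK x (prox y)
    have h2 := hK y (prox x)
    have e1 : ⟪prox x - x, prox y - prox x⟫ + ⟪prox y - y, prox x - prox y⟫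
        = ⟪x - y, prox x - prox y⟫ - ‖prox x - prox y‖ ^ 2 := by
      simp only [inner_sub_left, inner_sub_right, ← real_inner_self_eq_norm_sq]
      ring
    nlinarith
  -- g := id - prox is 1-Lipschitz
  have hgl : ∀ x y : EuclideanSpace ℝ (Fin N),
      ‖(x - prox x) - (y - prox y)‖ ≤ ‖x - y‖ := by
    intro x y
    have key : ‖(x - prox x) - (y - prox y)‖ ^ 2 ≤ ‖x - y‖ ^ 2 := by
      have hre : (x - prox x) - (y - prox y) = (x - y) - (prox x - prox y) := by module
      rw [hre, norm_sub_sq_real]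
      have := hfirm x y
      nlinarith
    exact (pow_le_pow_iff_left₀ (norm_nonneg _) (norm_nonneg _) two_ne_zero).mp key
  -- one-sided quadratic upper bound
  have hub : ∀ x y : EuclideanSpace ℝ (Fin N),
      env y ≤ env x + ⟪x - prox x, y - x⟫ + 1 / 2 * ‖y - x‖ ^ 2 := by
    intro x y
    have h1 : env y ≤ (1 / 2) * ‖prox x - y‖ ^ 2 + μ * h (prox x) := by
      rw [henv y]; exact hprox y (prox x)
    have hexp : ‖prox x - y‖ ^ 2 = ‖prox x - x‖ ^ 2 + 2 * ⟪prox x - x, x - y⟫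
        + ‖x - y‖ ^ 2 := by
      rw [show prox x - y = (prox x - x) + (x - y) by module, norm_add_sq_real]
    have hinner : ⟪prox x - x, x - y⟫ = ⟪x - prox x, y - x⟫ := by
      rw [show prox x - x = -(x - prox x) by module, show x - y = -(y - x) by module,
        inner_neg_neg]
    rw [henv x, norm_sub_rev y x]
    rw [hexp, hinner] at h1
    linarith
  -- the gradient
  have hgrad : ∀ x : EuclideanSpace ℝ (Fin N), HasGradientAt env (x - prox x) x := by
    intro x
    rw [hasGradientAt_iff_isLittleO]
    have bound : ∀ y : EuclideanSpace ℝ (Fin N),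
        |env y - env x - ⟪x - prox x, y - x⟫| ≤ 3 / 2 * ‖y - x‖ ^ 2 := by
      intro y
      rw [abs_le]
      constructor
      · have h1 := hub y x
        have h2 : ⟪y - prox y, x - y⟫ = -⟪y - prox y, y - x⟫ := by
          rw [show x - y = -(y - x) by module, inner_neg_right]
        rw [h2, norm_sub_rev x y] at h1
        have h3 : ⟪y - prox y, y - x⟫ - ⟪x - prox x, y - x⟫
            = ⟪(y - prox y) - (x - prox x), y - x⟫ := by
          simp only [inner_sub_left, inner_sub_right]; ring
        have h4 := neg_abs_le ⟪(y - prox y) - (x - prox x), y - x⟫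
        have h4' := abs_real_inner_le_norm ((y - prox y) - (x - prox x)) (y - x)
        have h5 : ‖(y - prox y) - (x - prox x)‖ * ‖y - x‖ ≤ ‖y - x‖ * ‖y - x‖ := by
          exact mul_le_mul_of_nonneg_right (hgl y x) (norm_nonneg _)
        nlinarith [sq_nonneg (‖y - x‖)]
      · have h1 := hub x y
        linarith [sq_nonneg ‖y - x‖]
    rw [Asymptotics.isLittleO_iff]
    intro ε hε
    rw [Metric.eventually_nhds_iff]
    refine ⟨ε / 2, by positivity, fun y hy => ?_⟩
    have hdy : ‖y - x‖ < ε / 2 := by rwa [← dist_eq_norm]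
    calc ‖env y - env x - ⟪x - prox x, y - x⟫‖
        = |env y - env x - ⟪x - prox x, y - x⟫| := rfl
      _ ≤ 3 / 2 * ‖y - x‖ ^ 2 := bound y
      _ ≤ ε * ‖y - x‖ := by nlinarith [norm_nonneg (y - x)]
  have hgrad' : ∀ x, gradient env x = x - prox x := fun x => (hgrad x).gradient
  refine ⟨?_, ?_, hgrad', ?_⟩
  · -- convexity
    refine ⟨convex_univ, ?_⟩
    intro x _ y _ t s ht hs hts
    have hcv := hconv.2 (Set.mem_univ (prox x)) (Set.mem_univ (prox y)) ht hs hts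
    simp only [smul_eq_mul] at hcv
    have hpr := hprox (t • x + s • y) (t • prox x + s • prox y)
    have hre : t • prox x + s • prox y - (t • x + s • y)
        = t • (prox x - x) + s • (prox y - y) := by module
    rw [hre] at hpr
    have hn : ‖t • (prox x - x) + s • (prox y - y)‖
        ≤ t * ‖prox x - x‖ + s * ‖prox y - y‖ := by
      calc _ ≤ ‖t • (prox x - x)‖ + ‖s • (prox y - y)‖ := norm_add_le _ _
        _ = t * ‖prox x - x‖ + s * ‖prox y - y‖ := by
          rw [norm_smul, norm_smul, Real.norm_eq_abs, Real.norm_eq_abs,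
            abs_of_nonneg ht, abs_of_nonneg hs]
    have hn2 : ‖t • (prox x - x) + s • (prox y - y)‖ ^ 2
        ≤ t * ‖prox x - x‖ ^ 2 + s * ‖prox y - y‖ ^ 2 := by
      nlinarith [norm_nonneg (t • (prox x - x) + s • (prox y - y)),
        norm_nonneg (prox x - x), norm_nonneg (prox y - y),
        mul_nonneg ht hs, sq_nonneg (‖prox x - x‖ - ‖prox y - y‖)]
    simp only [smul_eq_mul]
    rw [henv (t • x + s • y), henv x, henv y]
    nlinarith
  · -- C¹
    rw [contDiff_one_iff_fderiv]
    have hdiff : ∀ x : EuclideanSpace ℝ (Fin N), HasFDerivAt env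
        ((InnerProductSpace.toDual ℝ (EuclideanSpace ℝ (Fin N))) (x - prox x)) x :=
      fun x => (hgrad x).hasFDerivAt
    refine ⟨fun x => (hdiff x).differentiableAt, ?_⟩
    have heq : (fderiv ℝ env) = fun x =>
        (InnerProductSpace.toDual ℝ (EuclideanSpace ℝ (Fin N))) (x - prox x) := by
      funext x; exact (hdiff x).fderiv
    rw [heq]
    have hc : Continuous fun x : EuclideanSpace ℝ (Fin N) => x - prox x := by
      refine (LipschitzWith.of_dist_le_mul (K := 1) fun x y => ?_).continuous
      rw [dist_eq_norm, dist_eq_norm, NNReal.coe_one, one_mul]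
      exact hgl x y
    exact (InnerProductSpace.toDual ℝ (EuclideanSpace ℝ (Fin N))).continuous.comp hc
  · -- Lipschitz
    refine LipschitzWith.of_dist_le_mul fun x y => ?_
    rw [hgrad' x, hgrad' y, dist_eq_norm, dist_eq_norm, NNReal.coe_one, one_mul]
    exact hgl x y
end
end
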